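/- arXiv:1702.05257 — 2 statements merged into one kernel-verified Lean document; each statement's English description precedes it below -/
import Mathlib

section
/- For every integer n ≥ 3 the prism GP(n,1) is highly distance-balanced. -/
open SimpleGraph

/-- The set of vertices strictly closer to `u` than to `v`. -/
def wSet {V : Type*} (G : SimpleGraph V) (u v : V) : Set V :=
  {w | G.dist u w < G.dist v w}

/-- The pair `u, v` is balanced if `|W_{uv}| = |W_{vu}|`. -/
def IsBalancedPair {V : Type*} (G : SimpleGraph V) (u v : V) : Prop :=
  (wSet G u v).ncard = (wSet G v u).ncard

/-- `G` is `ℓ`-distance-balanced if every pair of vertices at distance `ℓ` is balanced. -/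
def IsDistBalanced {V : Type*} (G : SimpleGraph V) (ℓ : ℕ) : Prop :=
  ∀ u v : V, G.dist u v = ℓ → IsBalancedPair G u v

/-- `G` is highly distance-balanced if it is `ℓ`-distance-balanced for all `1 ≤ ℓ ≤ diam`. -/
def IsHighlyDistBalanced {V : Type*} (G : SimpleGraph V) : Prop :=
  ∀ ℓ : ℕ, 1 ≤ ℓ → ℓ ≤ G.diam → IsDistBalanced G ℓ

/-- The generalized Petersen graph `GP(n,k)`: `Sum.inl i` is the outer vertex `u_i`,
`Sum.inr i` is the inner vertex `v_i`. -/
def GP (n k : ℕ) : SimpleGraph (ZMod n ⊕ ZMod n) :=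
  SimpleGraph.fromRel (fun x y =>
    match x, y with
    | Sum.inl i, Sum.inl j => j = i + 1
    | Sum.inr i, Sum.inr j => j = i + (k : ZMod n)
    | Sum.inl i, Sum.inr j => i = j
    | Sum.inr _, Sum.inl _ => False)

/-- The Cayley graph of a group with connection set `S` (intended for `S = S⁻¹`, `1 ∉ S`). -/
def cayleyGraph {A : Type*} [Group A] (S : Set A) : SimpleGraph A :=
  SimpleGraph.fromRel (fun g h => g⁻¹ * h ∈ S)

/- ### Auxiliary lemmas -/

section Aux

variable {V : Type*} {G : SimpleGraph V}

lemma iso_dist_le (e : G ≃g G) (u v : V) : G.dist (e u) (e v) ≤ G.dist u v := by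
  by_cases hr : G.Reachable u v
  · obtain ⟨p, hp⟩ := hr.exists_walk_length_eq_dist
    calc G.dist (e u) (e v) ≤ (p.map e.toHom).length := SimpleGraph.dist_le _
      _ = G.dist u v := by rw [SimpleGraph.Walk.length_map, hp]
  · have hr' : ¬ G.Reachable (e u) (e v) := by
      intro h
      exact hr (by simpa using h.map e.symm.toHom)
    rw [SimpleGraph.dist_eq_zero_of_not_reachable hr,
      SimpleGraph.dist_eq_zero_of_not_reachable hr']

lemma iso_dist (e : G ≃g G) (u v : V) : G.dist (e u) (e v) = G.dist u v := by
  refine le_antisymm (iso_dist_le e u v) ?_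
  have := iso_dist_le e.symm (e u) (e v)
  simpa using this

/-- If there is an automorphism swapping `u` and `v`, the pair is balanced. -/
lemma isBalancedPair_of_swap (e : G ≃g G) (u v : V) (heu : e u = v) (hev : e v = u) :
    IsBalancedPair G u v := by
  have himg : wSet G v u = e '' wSet G u v := by
    ext z
    rw [Set.mem_image]
    constructor
    · intro hz
      refine ⟨e.symm z, ?_, by simp⟩
      have h1 : G.dist u (e.symm z) = G.dist v z := by
        rw [← iso_dist e u (e.symm z), heu]; simp
      have h2 : G.dist v (e.symm z) = G.dist u z := by
        rw [← iso_dist e v (e.symm z), hev]; simp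
      simpa [wSet, h1, h2] using hz
    · rintro ⟨w, hw, rfl⟩
      have h1 : G.dist v (e w) = G.dist u w := by rw [← heu, iso_dist]
      have h2 : G.dist u (e w) = G.dist v w := by rw [← hev, iso_dist]
      simpa [wSet, h1, h2] using hw
  unfold IsBalancedPair
  rw [himg, Set.ncard_image_of_injective _ e.injective]

end Aux

section Prism

variable {n : ℕ}

/-- Reflection of both cycles of the prism: `x ↦ c - x`. -/
def reflEquiv (c : ZMod n) : ZMod n ⊕ ZMod n ≃ ZMod n ⊕ ZMod n where
  toFun := Sum.map (fun x => c - x) (fun x => c - x)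
  invFun := Sum.map (fun x => c - x) (fun x => c - x)
  left_inv x := by cases x <;> simp
  right_inv x := by cases x <;> simp

lemma zmod_refl_aux (c i j : ZMod n) : c - j = c - i + 1 ↔ i = j + 1 := by
  constructor <;> intro h <;> linear_combination h

/-- The reflection automorphism of the prism. -/
def reflIso (c : ZMod n) : GP n 1 ≃g GP n 1 where
  toEquiv := reflEquiv c
  map_rel_iff' := by
    rintro (i | i) (j | j) <;>
      simp only [GP, reflEquiv, Equiv.coe_fn_mk, Sum.map_inl, Sum.map_inr,
        SimpleGraph.fromRel_adj, ne_eq, Sum.inl.injEq, Sum.inr.injEq, sub_right_inj,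
        Nat.cast_one, zmod_refl_aux, Sum.inl_ne_inr, Sum.inr_ne_inl,
        not_false_eq_true, true_and, false_and, and_false, false_or, or_false] <;>
      try tauto

@[simp] lemma reflIso_apply_inl (c i : ZMod n) :
    reflIso (n := n) c (Sum.inl i) = Sum.inl (c - i) := rfl

@[simp] lemma reflIso_apply_inr (c i : ZMod n) :
    reflIso (n := n) c (Sum.inr i) = Sum.inr (c - i) := rfl

/-- The automorphism of the prism swapping inner and outer cycle. -/
def swapIso : GP n 1 ≃g GP n 1 where
  toEquiv := Equiv.sumComm (ZMod n) (ZMod n)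
  map_rel_iff' := by
    rintro (i | i) (j | j) <;>
      simp [GP, SimpleGraph.fromRel_adj, eq_comm, or_comm, and_comm]

@[simp] lemma swapIso_apply_inl (i : ZMod n) :
    swapIso (n := n) (Sum.inl i) = Sum.inr i := rfl

@[simp] lemma swapIso_apply_inr (i : ZMod n) :
    swapIso (n := n) (Sum.inr i) = Sum.inl i := rfl

end Prism

theorem statement_3 (n : ℕ) (hn : 3 ≤ n) : IsHighlyDistBalanced (GP n 1) := by
  intro ℓ _ _ u v _
  obtain ⟨e, heu, hev⟩ : ∃ e : GP n 1 ≃g GP n 1, e u = v ∧ e v = u := by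
    match u, v with
    | Sum.inl i, Sum.inl j =>
      exact ⟨reflIso (i + j), by simp, by simp⟩
    | Sum.inr i, Sum.inr j =>
      exact ⟨reflIso (i + j), by simp, by simp⟩
    | Sum.inl i, Sum.inr j =>
      exact ⟨(swapIso).comp (reflIso (i + j)), by simp [Iso.comp],
        by simp [Iso.comp]⟩
    | Sum.inr i, Sum.inl j =>
      exact ⟨(swapIso).comp (reflIso (i + j)), by simp [Iso.comp],
        by simp [Iso.comp]⟩
  exact isBalancedPair_of_swap e u v heu hev
end

section
/- Let Γ be a connected bipartite finite simple graph of diameter 3 with bipartition sets X and Y. Then Γ is 2-distance-balanced if and only if any two vertices from the same bipartition set have the same degree. -/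
open SimpleGraph

section Aux
set_option linter.unusedSectionVars false
set_option linter.unusedVariables false
variable {V : Type*} [Fintype V] {G : SimpleGraph V} {X Y : Set V}

lemma walk_parity (hunion : X ∪ Y = Set.univ) (hdisj : Disjoint X Y)
    (hbip : ∀ u v : V, G.Adj u v → ((u ∈ X ∧ v ∈ Y) ∨ (u ∈ Y ∧ v ∈ X)))
    {a b : V} (p : G.Walk a b) : ((a ∈ X ↔ b ∈ X) ↔ Even p.length) := by
  induction p with
  | nil => simp
  | @cons a c b h p ih =>
    have key : a ∈ X ↔ ¬ (c ∈ X) := by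
      rcases hbip a c h with ⟨ha, hcy⟩ | ⟨hay, hcx⟩
      · exact ⟨fun _ hcx => hdisj.le_bot ⟨hcx, hcy⟩, fun _ => ha⟩
      · constructor
        · intro haX _; exact hdisj.le_bot ⟨haX, hay⟩
        · intro hn; exact absurd hcx hn
    simp only [Walk.length_cons, Nat.even_add_one, ← ih]
    tauto

lemma dist_parity (hc : G.Connected)
    (hunion : X ∪ Y = Set.univ) (hdisj : Disjoint X Y)
    (hbip : ∀ u v : V, G.Adj u v → ((u ∈ X ∧ v ∈ Y) ∨ (u ∈ Y ∧ v ∈ X)))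
    (a b : V) : ((a ∈ X ↔ b ∈ X) ↔ Even (G.dist a b)) := by
  obtain ⟨p, hp⟩ := hc.exists_walk_length_eq_dist a b
  rw [← hp]
  exact walk_parity hunion hdisj hbip p

lemma wSet_eq_of_dist_two (hc : G.Connected) (hdiam : G.diam = 3)
    (hunion : X ∪ Y = Set.univ) (hdisj : Disjoint X Y)
    (hbip : ∀ u v : V, G.Adj u v → ((u ∈ X ∧ v ∈ Y) ∨ (u ∈ Y ∧ v ∈ X)))
    {u v : V} (h2 : G.dist u v = 2) :
    wSet G u v = insert u (G.neighborSet u \ G.neighborSet v) := by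
  have hne : G.ediam ≠ ⊤ := fun h => by simp [SimpleGraph.diam, h] at hdiam
  have hle : ∀ a b : V, G.dist a b ≤ 3 := fun a b => hdiam ▸ dist_le_diam hne
  have hpar : ∀ a b : V, ((a ∈ X ↔ b ∈ X) ↔ Even (G.dist a b)) :=
    dist_parity hc hunion hdisj hbip
  have huv : u ∈ X ↔ v ∈ X := by rw [hpar u v, h2]; decide
  ext w
  simp only [wSet, Set.mem_setOf_eq, Set.mem_insert_iff, Set.mem_diff, mem_neighborSet]
  constructor
  · intro hw
    have htri : G.dist v w ≤ 2 + G.dist u w := by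
      have hvu : G.dist v u = 2 := by rwa [SimpleGraph.dist_comm]
      have := hc.dist_triangle (u := v) (v := u) (w := w)
      rwa [hvu] at this
    have hpeq : Even (G.dist u w) ↔ Even (G.dist v w) := by
      rw [← hpar u w, ← hpar v w]; tauto
    rw [Nat.even_iff, Nat.even_iff] at hpeq
    have heq : G.dist v w = G.dist u w + 2 := by omega
    have h1 : G.dist u w ≤ 1 := by have := hle v w; omega
    interval_cases h : G.dist u w
    · left; exact ((hc.dist_eq_zero_iff).mp h).symm
    · right
      refine ⟨dist_eq_one_iff_adj.mp h, fun hadj => ?_⟩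
      have := dist_eq_one_iff_adj.mpr hadj
      omega
  · rintro (rfl | ⟨hadj, hnadj⟩)
    · have hvw : G.dist v w = 2 := by rwa [SimpleGraph.dist_comm]
      rw [SimpleGraph.dist_self, hvw]; omega
    · have h1 : G.dist u w = 1 := dist_eq_one_iff_adj.mpr hadj
      have hodd : ¬ Even (G.dist v w) := by
        rw [← hpar v w]
        have huw : ¬ (u ∈ X ↔ w ∈ X) := by
          rw [hpar u w, h1]; decide
        tauto
      have hne1 : G.dist v w ≠ 1 := fun h => hnadj (dist_eq_one_iff_adj.mp h)
      rw [Nat.even_iff] at hodd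
      omega

lemma balanced_iff_of_dist_two (hc : G.Connected) (hdiam : G.diam = 3)
    (hunion : X ∪ Y = Set.univ) (hdisj : Disjoint X Y)
    (hbip : ∀ u v : V, G.Adj u v → ((u ∈ X ∧ v ∈ Y) ∨ (u ∈ Y ∧ v ∈ X)))
    {u v : V} (h2 : G.dist u v = 2) :
    IsBalancedPair G u v ↔ (G.neighborSet u).ncard = (G.neighborSet v).ncard := by
  classical
  have h2' : G.dist v u = 2 := by rwa [SimpleGraph.dist_comm]
  have e1 := wSet_eq_of_dist_two hc hdiam hunion hdisj hbip h2
  have e2 := wSet_eq_of_dist_two hc hdiam hunion hdisj hbip h2'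
  unfold IsBalancedPair
  rw [e1, e2, Set.ncard_insert_of_notMem (by simp),
    Set.ncard_insert_of_notMem (by simp)]
  have key := Set.ncard_eq_ncard_iff_ncard_diff_eq_ncard_diff
    (s := G.neighborSet u) (t := G.neighborSet v) (Set.toFinite _) (Set.toFinite _)
  omega
end Aux

theorem statement_11 {V : Type*} [Fintype V] (G : SimpleGraph V) (hc : G.Connected)
    (hdiam : G.diam = 3) (X Y : Set V)
    (hunion : X ∪ Y = Set.univ) (hdisj : Disjoint X Y)
    (hbip : ∀ u v : V, G.Adj u v → ((u ∈ X ∧ v ∈ Y) ∨ (u ∈ Y ∧ v ∈ X))) :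
    IsDistBalanced G 2 ↔
      ((∀ u ∈ X, ∀ v ∈ X, (G.neighborSet u).ncard = (G.neighborSet v).ncard) ∧
       (∀ u ∈ Y, ∀ v ∈ Y, (G.neighborSet u).ncard = (G.neighborSet v).ncard)) := by
  have hne : G.ediam ≠ ⊤ := fun h => by simp [SimpleGraph.diam, h] at hdiam
  have hle : ∀ a b : V, G.dist a b ≤ 3 := fun a b => hdiam ▸ dist_le_diam hne
  have hpar : ∀ a b : V, ((a ∈ X ↔ b ∈ X) ↔ Even (G.dist a b)) :=
    dist_parity hc hunion hdisj hbip
  have hdist2 : ∀ u v : V, u ≠ v → (u ∈ X ↔ v ∈ X) → G.dist u v = 2 := by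
    intro u v huv hx
    have hev : Even (G.dist u v) := (hpar u v).mp hx
    have hpos : 0 < G.dist u v := hc.pos_dist_of_ne huv
    rw [Nat.even_iff] at hev
    have := hle u v
    omega
  constructor
  · intro hbal
    constructor
    · intro u hu v hv
      rcases eq_or_ne u v with rfl | hne'
      · rfl
      · have h2 := hdist2 u v hne' (iff_of_true hu hv)
        exact (balanced_iff_of_dist_two hc hdiam hunion hdisj hbip h2).mp (hbal u v h2)
    · intro u hu v hv
      rcases eq_or_ne u v with rfl | hne'
      · rfl
      · have hux : u ∉ X := fun h => hdisj.le_bot ⟨h, hu⟩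
        have hvx : v ∉ X := fun h => hdisj.le_bot ⟨h, hv⟩
        have h2 := hdist2 u v hne' (iff_of_false hux hvx)
        exact (balanced_iff_of_dist_two hc hdiam hunion hdisj hbip h2).mp (hbal u v h2)
  · rintro ⟨hX, hY⟩ u v h2
    rw [balanced_iff_of_dist_two hc hdiam hunion hdisj hbip h2]
    have hx : u ∈ X ↔ v ∈ X := by rw [hpar u v, h2]; decide
    by_cases hu : u ∈ X
    · exact hX u hu v (hx.mp hu)
    · have huY : u ∈ Y := by
        rcases (hunion ▸ Set.mem_univ u : u ∈ X ∪ Y) with h | h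
        · exact absurd h hu
        · exact h
      have hvY : v ∈ Y := by
        rcases (hunion ▸ Set.mem_univ v : v ∈ X ∪ Y) with h | h
        · exact absurd (hx.mpr h) hu
        · exact h
      exact hY u huY v hvY
end
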